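/- If α_n(t), n ∈ ℤ≥0, are continuous functions solving the Schur flow equations for t > 0 with |α_n(0)| < 1 for all n, then |α_n(t)| < 1 for all n and all t > 0. -/

import Mathlib

open Complex MeasureTheory intervalIntegral

theorem stmt2 (α : ℤ → ℝ → ℂ)
    (hcont : ∀ n : ℤ, 0 ≤ n → ContinuousOn (α n) (Set.Ici 0))
    (hneg : ∀ t, α (-1) t = -1)
    (hflow : ∀ n : ℤ, 0 ≤ n → ∀ t : ℝ, 0 < t →
      HasDerivAt (α n) ((1 - ‖α n t‖ ^ 2) * (α (n + 1) t - α (n - 1) t)) t)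
    (hinit : ∀ n : ℤ, 0 ≤ n → ‖α n 0‖ < 1) :
    ∀ n : ℤ, 0 ≤ n → ∀ t : ℝ, 0 < t → ‖α n t‖ < 1 := by
  intro n hn t ht
  -- auxiliary functions
  set β : ℝ → ℂ := fun s => α (n + 1) s - α (n - 1) s with hβ
  have hβcont : ContinuousOn β (Set.Ici 0) := by
    apply ContinuousOn.sub (hcont (n + 1) (by omega))
    rcases eq_or_lt_of_le hn with h0 | h1
    · have : (fun s => α (n - 1) s) = fun _ : ℝ => (-1 : ℂ) := by
        funext s; rw [← h0]; simpa using hneg s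
      rw [show α (n-1) = fun s => α (n-1) s from rfl, this]
      exact continuousOn_const
    · exact hcont (n - 1) (by omega)
  set h : ℝ → ℝ := fun s => 2 * (starRingEnd ℂ (α n s) * β s).re with hh
  have hhcont : ContinuousOn h (Set.Ici 0) := by
    apply ContinuousOn.mul continuousOn_const
    exact Complex.continuous_re.comp_continuousOn
      (((Complex.continuous_conj.comp_continuousOn (hcont n hn))).mul hβcont)
  set g : ℝ → ℝ := fun s => 1 - ‖α n s‖ ^ 2 with hg
  have hgcont : ContinuousOn g (Set.Ici 0) := by
    apply ContinuousOn.sub continuousOn_const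
    exact ((hcont n hn).norm.pow 2)
  -- derivative of g
  have hgderiv : ∀ s : ℝ, 0 < s → HasDerivAt g (-(g s * h s)) s := by
    intro s hs
    have hf := hflow n hn s hs
    have hi := hf.inner ℝ hf
    simp only [real_inner_self_eq_norm_sq] at hi
    have hc : ((1:ℂ) - (‖α n s‖:ℂ) ^ 2) = (((1 - ‖α n s‖ ^ 2 : ℝ)):ℂ) := by
      push_cast; ring
    have key : (inner ℝ (α n s) (((1:ℂ) - (‖α n s‖:ℂ) ^ 2) * (α (n + 1) s - α (n - 1) s)) : ℝ)
        = (1 - ‖α n s‖ ^ 2) * (starRingEnd ℂ (α n s) * (α (n + 1) s - α (n - 1) s)).re := by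
      rw [hc, Complex.inner]
      simp only [map_mul, Complex.mul_re, Complex.mul_im, Complex.sub_re, Complex.sub_im,
        Complex.conj_re, Complex.conj_im, Complex.ofReal_re, Complex.ofReal_im]
      ring
    have key2 : (inner ℝ (((1:ℂ) - (‖α n s‖:ℂ) ^ 2) * (α (n + 1) s - α (n - 1) s)) (α n s) : ℝ)
        = (1 - ‖α n s‖ ^ 2) * (starRingEnd ℂ (α n s) * (α (n + 1) s - α (n - 1) s)).re := by
      rw [real_inner_comm]; exact key
    have h2 : HasDerivAt (fun u => ‖α n u‖ ^ 2) (g s * h s) s := by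
      refine hi.congr_deriv ?_
      simp only [key, key2, hg, hh, hβ]
      ring
    exact h2.const_sub 1
  -- primitive of h
  set H : ℝ → ℝ := fun u => ∫ s in (0:ℝ)..u, h s with hH
  have hint : ∀ u : ℝ, 0 ≤ u → IntervalIntegrable h volume 0 u := by
    intro u hu
    apply ContinuousOn.intervalIntegrable
    apply hhcont.mono
    rw [Set.uIcc_of_le hu]
    exact fun x hx => hx.1
  have hHcont : ContinuousOn H (Set.Icc 0 t) := by
    have := continuousOn_primitive_interval' (μ := volume) (hint t ht.le)
      (by rw [Set.uIcc_of_le ht.le]; exact Set.left_mem_Icc.2 ht.le)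
    apply this.mono
    rw [Set.uIcc_of_le ht.le]
  have hHderiv : ∀ s : ℝ, 0 < s → HasDerivAt H (h s) s := by
    intro s hs
    apply integral_hasDerivAt_right (hint s hs.le)
    · exact ContinuousOn.stronglyMeasurableAtFilter isOpen_Ioi
        (hhcont.mono Set.Ioi_subset_Ici_self) s hs
    · exact (hhcont s (Set.mem_Ici.2 hs.le)).continuousAt (Ici_mem_nhds hs)
  -- the product G = g * exp H
  set G : ℝ → ℝ := fun u => g u * Real.exp (H u) with hG
  have hGderiv : ∀ s : ℝ, 0 < s → HasDerivAt G 0 s := by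
    intro s hs
    have := (hgderiv s hs).fun_mul ((hHderiv s hs).exp)
    refine this.congr_deriv ?_
    ring
  have hGcont : ContinuousOn G (Set.Icc 0 t) := by
    apply ContinuousOn.mul (hgcont.mono (fun x hx => hx.1))
    exact Real.continuous_exp.comp_continuousOn hHcont
  -- G is constant on [ε, t] for every ε ∈ (0, t]
  have hconst : ∀ ε ∈ Set.Ioc (0:ℝ) t, G t = G ε := by
    intro ε hε
    have := constant_of_has_deriv_right_zero
      (f := G) (a := ε) (b := t)
      (hGcont.mono (Set.Icc_subset_Icc hε.1.le le_rfl))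
      (fun x hx => ((hGderiv x (lt_of_lt_of_le hε.1 hx.1)).hasDerivWithinAt))
    exact this t (Set.right_mem_Icc.2 hε.2)
  -- limit ε → 0⁺ gives G t = G 0
  have hGt : G t = G 0 := by
    have hne : (nhdsWithin (0:ℝ) (Set.Ioc 0 t)).NeBot := left_nhdsWithin_Ioc_neBot ht
    have h1 : Filter.Tendsto G (nhdsWithin (0:ℝ) (Set.Ioc 0 t)) (nhds (G 0)) := by
      have := (hGcont 0 (Set.mem_Icc.2 ⟨le_rfl, ht.le⟩)).mono_left
        (nhdsWithin_mono _ Set.Ioc_subset_Icc_self)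
      exact this
    have h2 : Filter.Tendsto G (nhdsWithin (0:ℝ) (Set.Ioc 0 t)) (nhds (G t)) := by
      apply Filter.Tendsto.congr' _ tendsto_const_nhds
      filter_upwards [self_mem_nhdsWithin] with ε hε
      exact hconst ε hε
    exact tendsto_nhds_unique h2 h1
  -- conclude
  have hH0 : H 0 = 0 := by simp [hH]
  have hg0 : 0 < g 0 := by
    have := hinit n hn
    have h0 := norm_nonneg (α n 0)
    simp only [hg]
    nlinarith
  have hgt : 0 < g t := by
    have hexp : 0 < Real.exp (H t) := Real.exp_pos _
    have : g t * Real.exp (H t) = g 0 := by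
      have := hGt
      simp only [hG, hH0, Real.exp_zero, mul_one] at this
      exact this
    nlinarith
  have := norm_nonneg (α n t)
  simp only [hg] at hgt
  nlinarith
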